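/- Assume ‖P_Ω P_T‖ ≤ 1/2 and λ < 1. Suppose there exists a matrix W with P_T W = 0, ‖W‖ < 1/2, ‖P_Ω(UV* − λ·sgn(S₀) + W)‖_F ≤ λ/4, and ‖P_{Ω⊥}(UV* + W)‖_∞ < λ/2. Then the pair (L₀, S₀) is the unique optimal solution of the problem: minimize ‖L‖_* + λ‖S‖_1 over all pairs (L,S) with L + S = L₀ + S₀. -/

import Mathlib

open Matrix BigOperators

noncomputable def frobNorm {m k : ℕ} (A : Matrix (Fin m) (Fin k) ℝ) : ℝ :=
  Real.sqrt (∑ i, ∑ j, (A i j) ^ 2)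

noncomputable def nuclearNorm {m k : ℕ} (A : Matrix (Fin m) (Fin k) ℝ) : ℝ :=
  ∑ i, Real.sqrt ((show (Aᵀ * A).IsHermitian by
    simpa [Matrix.conjTranspose_eq_transpose_of_trivial] using
      Matrix.isHermitian_conjTranspose_mul_self A).eigenvalues i)

def l1Norm {m k : ℕ} (A : Matrix (Fin m) (Fin k) ℝ) : ℝ :=
  ∑ i, ∑ j, |A i j|

noncomputable def linfNorm {m k : ℕ} (A : Matrix (Fin m) (Fin k) ℝ) : ℝ :=
  ⨆ i, ⨆ j, |A i j|

noncomputable def specNorm {m k : ℕ} (A : Matrix (Fin m) (Fin k) ℝ) : ℝ :=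
  ‖LinearMap.toContinuousLinearMap (Matrix.toEuclideanLin A)‖

def finner {m k : ℕ} (A B : Matrix (Fin m) (Fin k) ℝ) : ℝ :=
  ∑ i, ∑ j, A i j * B i j

noncomputable def projSet {n : ℕ} (Ω : Set (Fin n × Fin n)) (S : Matrix (Fin n) (Fin n) ℝ) :
    Matrix (Fin n) (Fin n) ℝ :=
  fun i j => Ω.indicator (fun p => S p.1 p.2) (i, j)

def suppSet {n : ℕ} (S : Matrix (Fin n) (Fin n) ℝ) : Set (Fin n × Fin n) :=
  {p | S p.1 p.2 ≠ 0}

noncomputable def sgnMat {n : ℕ} (S : Matrix (Fin n) (Fin n) ℝ) : Matrix (Fin n) (Fin n) ℝ :=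
  fun i j => Real.sign (S i j)

def Tspace {n r : ℕ} (U V : Matrix (Fin n) (Fin r) ℝ) : Set (Matrix (Fin n) (Fin n) ℝ) :=
  {X | ∃ Q R : Matrix (Fin n) (Fin r) ℝ, X = U * Qᵀ + R * Vᵀ}

def IsOrthProjOnto {n : ℕ} (P : Matrix (Fin n) (Fin n) ℝ →ₗ[ℝ] Matrix (Fin n) (Fin n) ℝ)
    (T : Set (Matrix (Fin n) (Fin n) ℝ)) : Prop :=
  (∀ X, P X ∈ T) ∧ (∀ X ∈ T, P X = X) ∧ (∀ X Y, Y ∈ T → finner (X - P X) Y = 0)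

noncomputable def pairFrob {n : ℕ} (X : Matrix (Fin n) (Fin n) ℝ × Matrix (Fin n) (Fin n) ℝ) : ℝ :=
  Real.sqrt (frobNorm X.1 ^ 2 + frobNorm X.2 ^ 2)

noncomputable def projGamma {n : ℕ} (X : Matrix (Fin n) (Fin n) ℝ × Matrix (Fin n) (Fin n) ℝ) :
    Matrix (Fin n) (Fin n) ℝ × Matrix (Fin n) (Fin n) ℝ :=
  ((1/2 : ℝ) • (X.1 + X.2), (1/2 : ℝ) • (X.1 + X.2))

open scoped Classical

noncomputable def suppFinset {n : ℕ} (S : Matrix (Fin n) (Fin n) ℝ) : Finset (Fin n × Fin n) :=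
  Finset.univ.filter (fun p => S p.1 p.2 ≠ 0)


noncomputable def vnorm {k : ℕ} (v : Fin k → ℝ) : ℝ := Real.sqrt (∑ i, v i ^ 2)

section Basic
variable {m k : ℕ}

lemma finner_comm (A B : Matrix (Fin m) (Fin k) ℝ) : finner A B = finner B A := by
  simp [finner, mul_comm]

lemma finner_add_right (A B C : Matrix (Fin m) (Fin k) ℝ) :
    finner A (B + C) = finner A B + finner A C := by
  simp [finner, Matrix.add_apply, mul_add, Finset.sum_add_distrib]

lemma finner_add_left (A B C : Matrix (Fin m) (Fin k) ℝ) :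
    finner (A + B) C = finner A C + finner B C := by
  simp [finner, Matrix.add_apply, add_mul, Finset.sum_add_distrib]

lemma finner_sub_right (A B C : Matrix (Fin m) (Fin k) ℝ) :
    finner A (B - C) = finner A B - finner A C := by
  simp [finner, Matrix.sub_apply, mul_sub, Finset.sum_sub_distrib]

lemma finner_sub_left (A B C : Matrix (Fin m) (Fin k) ℝ) :
    finner (A - B) C = finner A C - finner B C := by
  simp [finner, Matrix.sub_apply, sub_mul, Finset.sum_sub_distrib]

lemma finner_smul_right (c : ℝ) (A B : Matrix (Fin m) (Fin k) ℝ) :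
    finner A (c • B) = c * finner A B := by
  simp [finner, Matrix.smul_apply, Finset.mul_sum, smul_eq_mul]; ring_nf
  congr 1; ext i; congr 1; ext j; ring

lemma finner_neg_left (A B : Matrix (Fin m) (Fin k) ℝ) : finner (-A) B = - finner A B := by
  simp [finner, Matrix.neg_apply, Finset.sum_neg_distrib]

lemma finner_zero_right (A : Matrix (Fin m) (Fin k) ℝ) : finner A 0 = 0 := by
  simp [finner]

lemma frobNorm_eq_sqrt_finner (A : Matrix (Fin m) (Fin k) ℝ) :
    frobNorm A = Real.sqrt (finner A A) := by
  simp [frobNorm, finner, pow_two]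

lemma finner_self_nonneg (A : Matrix (Fin m) (Fin k) ℝ) : 0 ≤ finner A A := by
  apply Finset.sum_nonneg; intro i _; apply Finset.sum_nonneg; intro j _; exact mul_self_nonneg _

lemma frobNorm_nonneg (A : Matrix (Fin m) (Fin k) ℝ) : 0 ≤ frobNorm A := Real.sqrt_nonneg _

lemma sq_frobNorm (A : Matrix (Fin m) (Fin k) ℝ) : frobNorm A ^ 2 = finner A A := by
  rw [frobNorm_eq_sqrt_finner, Real.sq_sqrt (finner_self_nonneg A)]

lemma frobNorm_eq_zero {A : Matrix (Fin m) (Fin k) ℝ} (h : frobNorm A = 0) : A = 0 := by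
  have h2 : finner A A = 0 := by
    have := sq_frobNorm A; rw [h] at this; simpa using this.symm
  ext i j
  have hnn : ∀ p ∈ (Finset.univ : Finset (Fin m)), 0 ≤ ∑ q, A p q * A p q := by
    intro p _; exact Finset.sum_nonneg fun q _ => mul_self_nonneg _
  have hrow := (Finset.sum_eq_zero_iff_of_nonneg hnn).mp h2 i (Finset.mem_univ i)
  have := (Finset.sum_eq_zero_iff_of_nonneg (fun q _ => mul_self_nonneg (A i q))).mp hrow j
    (Finset.mem_univ j)
  simpa [mul_self_eq_zero] using this

/-- Cauchy–Schwarz for `finner`. -/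
lemma abs_finner_le (A B : Matrix (Fin m) (Fin k) ℝ) :
    |finner A B| ≤ frobNorm A * frobNorm B := by
  have key : finner A B ^ 2 ≤ finner A A * finner B B := by
    classical
    have h1 : ∀ (C D : Matrix (Fin m) (Fin k) ℝ), finner C D
        = ∑ p : Fin m × Fin k, C p.1 p.2 * D p.1 p.2 := by
      intro C D; rw [finner]; exact (Fintype.sum_prod_type (f := fun p : Fin m × Fin k => C p.1 p.2 * D p.1 p.2)).symm
    rw [h1, h1, h1]
    have := Finset.sum_mul_sq_le_sq_mul_sq (Finset.univ : Finset (Fin m × Fin k))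
      (fun p => A p.1 p.2) (fun p => B p.1 p.2)
    simpa [pow_two] using this
  have := Real.sqrt_le_sqrt key
  rw [Real.sqrt_sq_eq_abs, Real.sqrt_mul (finner_self_nonneg A)] at this
  rwa [← frobNorm_eq_sqrt_finner, ← frobNorm_eq_sqrt_finner] at this

lemma finner_le_frob_mul (A B : Matrix (Fin m) (Fin k) ℝ) :
    finner A B ≤ frobNorm A * frobNorm B := le_trans (le_abs_self _) (abs_finner_le A B)

lemma frobNorm_add_le (A B : Matrix (Fin m) (Fin k) ℝ) :
    frobNorm (A + B) ≤ frobNorm A + frobNorm B := by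
  have h : finner (A + B) (A + B) ≤ (frobNorm A + frobNorm B) ^ 2 := by
    rw [finner_add_left, finner_add_right, finner_add_right]
    have hab := finner_le_frob_mul A B
    have hba := finner_le_frob_mul B A
    rw [← sq_frobNorm, ← sq_frobNorm]
    nlinarith [frobNorm_nonneg A, frobNorm_nonneg B]
  calc frobNorm (A + B) = Real.sqrt (finner (A+B) (A+B)) := frobNorm_eq_sqrt_finner _
    _ ≤ Real.sqrt ((frobNorm A + frobNorm B) ^ 2) := Real.sqrt_le_sqrt h
    _ = |frobNorm A + frobNorm B| := Real.sqrt_sq_eq_abs _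
    _ = frobNorm A + frobNorm B := abs_of_nonneg (add_nonneg (frobNorm_nonneg A) (frobNorm_nonneg B))

end Basic

section Vec
variable {m k : ℕ}

lemma vnorm_nonneg (v : Fin k → ℝ) : 0 ≤ vnorm v := Real.sqrt_nonneg _

lemma dot_self_nonneg (v : Fin k → ℝ) : 0 ≤ v ⬝ᵥ v :=
  Finset.sum_nonneg fun i _ => mul_self_nonneg _

lemma vnorm_sq (v : Fin k → ℝ) : vnorm v ^ 2 = v ⬝ᵥ v := by
  rw [vnorm, Real.sq_sqrt]
  · simp [dotProduct, pow_two]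
  · exact Finset.sum_nonneg fun i _ => sq_nonneg _

lemma vnorm_eq_norm (v : Fin k → ℝ) : vnorm v = ‖(WithLp.equiv 2 (Fin k → ℝ)).symm v‖ := by
  rw [EuclideanSpace.norm_eq]
  unfold vnorm
  congr 1
  apply Finset.sum_congr rfl
  intro i _
  rw [Real.norm_eq_abs, sq_abs]; rfl

lemma abs_dot_le (v w : Fin k → ℝ) : |v ⬝ᵥ w| ≤ vnorm v * vnorm w := by
  have key := Finset.sum_mul_sq_le_sq_mul_sq (Finset.univ : Finset (Fin k)) v w
  have h := Real.sqrt_le_sqrt key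
  rw [Real.sqrt_sq_eq_abs, Real.sqrt_mul (Finset.sum_nonneg fun i _ => sq_nonneg (v i))] at h
  exact h

lemma mulVec_dot {A : Matrix (Fin m) (Fin k) ℝ} (x : Fin k → ℝ) (y : Fin m → ℝ) :
    (A *ᵥ x) ⬝ᵥ y = x ⬝ᵥ (Aᵀ *ᵥ y) := by
  rw [dotProduct_comm, dotProduct_mulVec, ← Matrix.mulVec_transpose, dotProduct_comm]

lemma spec_mulVec_le (A : Matrix (Fin m) (Fin k) ℝ) (v : Fin k → ℝ) :
    vnorm (A *ᵥ v) ≤ specNorm A * vnorm v := by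
  have h := (LinearMap.toContinuousLinearMap (Matrix.toEuclideanLin A)).le_opNorm
    ((WithLp.equiv 2 (Fin k → ℝ)).symm v)
  rw [LinearMap.coe_toContinuousLinearMap'] at h
  rw [WithLp.equiv_symm_apply, Matrix.toEuclideanLin_apply_piLp_toLp] at h
  rw [vnorm_eq_norm, vnorm_eq_norm]
  exact h

lemma specNorm_nonneg (A : Matrix (Fin m) (Fin k) ℝ) : 0 ≤ specNorm A := norm_nonneg _

lemma specNorm_le_of {A : Matrix (Fin m) (Fin k) ℝ} {c : ℝ} (hc : 0 ≤ c)
    (h : ∀ v, vnorm (A *ᵥ v) ≤ c * vnorm v) : specNorm A ≤ c := by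
  apply ContinuousLinearMap.opNorm_le_bound _ hc
  intro x
  have hx : x = (WithLp.equiv 2 (Fin k → ℝ)).symm ((WithLp.equiv 2 (Fin k → ℝ)) x) :=
    (Equiv.symm_apply_apply _ _).symm
  rw [LinearMap.coe_toContinuousLinearMap']
  rw [hx]
  show ‖(WithLp.equiv 2 (Fin m → ℝ)).symm (A *ᵥ (WithLp.equiv 2 (Fin k → ℝ) x))‖ ≤
    c * ‖(WithLp.equiv 2 (Fin k → ℝ)).symm ((WithLp.equiv 2 (Fin k → ℝ)) x)‖
  rw [← vnorm_eq_norm, ← vnorm_eq_norm]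
  exact h _

lemma specNorm_neg (A : Matrix (Fin m) (Fin k) ℝ) : specNorm (-A) = specNorm A := by
  unfold specNorm
  rw [map_neg, map_neg, norm_neg]

lemma finner_eq_trace (A B : Matrix (Fin m) (Fin k) ℝ) :
    finner A B = Matrix.trace (Aᵀ * B) := by
  rw [finner, Matrix.trace]
  rw [Finset.sum_comm]
  apply Finset.sum_congr rfl
  intro j _
  simp [Matrix.diag, Matrix.mul_apply, Matrix.transpose_apply]

lemma quad_le {k : ℕ} {P Q : Matrix (Fin k) (Fin k) ℝ} (hPs : Pᵀ = P) (hPi : P * P = P)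
    (hQs : Qᵀ = Q) (hQi : Q * Q = Q) (hPQ : P * Q = 0) (x : Fin k → ℝ) :
    x ⬝ᵥ ((P + Q) *ᵥ x) ≤ x ⬝ᵥ x := by
  have hQP : Q * P = 0 := by
    have := congrArg Matrix.transpose hPQ
    rwa [Matrix.transpose_mul, hPs, hQs, Matrix.transpose_zero] at this
  have hpp : (P *ᵥ x) ⬝ᵥ (P *ᵥ x) = x ⬝ᵥ (P *ᵥ x) := by
    rw [mulVec_dot, hPs, Matrix.mulVec_mulVec, hPi]
  have hqq : (Q *ᵥ x) ⬝ᵥ (Q *ᵥ x) = x ⬝ᵥ (Q *ᵥ x) := by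
    rw [mulVec_dot, hQs, Matrix.mulVec_mulVec, hQi]
  have hpq : (P *ᵥ x) ⬝ᵥ (Q *ᵥ x) = 0 := by
    rw [mulVec_dot, hPs, Matrix.mulVec_mulVec, hPQ]
    simp
  have hqp : (Q *ᵥ x) ⬝ᵥ (P *ᵥ x) = 0 := by
    rw [mulVec_dot, hQs, Matrix.mulVec_mulVec, hQP]
    simp
  have h0 : 0 ≤ (x - P *ᵥ x - Q *ᵥ x) ⬝ᵥ (x - P *ᵥ x - Q *ᵥ x) := dot_self_nonneg _
  simp only [sub_dotProduct, dotProduct_sub] at h0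
  have hgoal : x ⬝ᵥ ((P + Q) *ᵥ x) = x ⬝ᵥ (P *ᵥ x) + x ⬝ᵥ (Q *ᵥ x) := by
    rw [Matrix.add_mulVec, dotProduct_add]
  rw [hgoal]
  have hxp : (P *ᵥ x) ⬝ᵥ x = x ⬝ᵥ (P *ᵥ x) := dotProduct_comm _ _
  have hxq : (Q *ᵥ x) ⬝ᵥ x = x ⬝ᵥ (Q *ᵥ x) := dotProduct_comm _ _
  linarith [h0]

lemma vnorm_mulVec_sq {A : Matrix (Fin m) (Fin k) ℝ} (x : Fin k → ℝ) :
    vnorm (A *ᵥ x) ^ 2 = x ⬝ᵥ ((Aᵀ * A) *ᵥ x) := by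
  rw [vnorm_sq, mulVec_dot, Matrix.mulVec_mulVec]

/-- If `AᵀA` acts as a contraction quadratic form bounded by `xᵀx`, then `specNorm A ≤ 1`. -/
lemma specNorm_le_one_of_quad {A : Matrix (Fin m) (Fin k) ℝ}
    (h : ∀ x, x ⬝ᵥ ((Aᵀ * A) *ᵥ x) ≤ x ⬝ᵥ x) : specNorm A ≤ 1 := by
  apply specNorm_le_of zero_le_one
  intro v
  rw [one_mul]
  have h1 : vnorm (A *ᵥ v) ^ 2 ≤ vnorm v ^ 2 := by
    rw [vnorm_mulVec_sq, vnorm_sq]; exact h v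
  nlinarith [vnorm_nonneg (A *ᵥ v), vnorm_nonneg v]

/-- von Neumann-type bound: `⟨G, U diag σ Vᵀ⟩ ≤ ‖G‖ ∑ σ`. -/
lemma finner_factored_le {n r : ℕ} (G : Matrix (Fin n) (Fin n) ℝ)
    (U V : Matrix (Fin n) (Fin r) ℝ) (σ : Fin r → ℝ) (hσ : ∀ i, 0 ≤ σ i)
    (hU : ∀ i, vnorm (fun a => U a i) ≤ 1) (hV : ∀ i, vnorm (fun a => V a i) ≤ 1) :
    finner G (U * Matrix.diagonal σ * Vᵀ) ≤ specNorm G * ∑ i, σ i := by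
  rw [finner_eq_trace]
  have step : Gᵀ * (U * Matrix.diagonal σ * Vᵀ) = (Gᵀ * U * Matrix.diagonal σ) * Vᵀ := by
    rw [← Matrix.mul_assoc, ← Matrix.mul_assoc]
  rw [step, Matrix.trace_mul_comm]
  rw [Matrix.trace]
  have diagentry : ∀ i, (Vᵀ * (Gᵀ * U * Matrix.diagonal σ)).diag i
      = σ i * ((fun a => V a i) ⬝ᵥ (Gᵀ *ᵥ (fun a => U a i))) := by
    intro i
    rw [Matrix.diag]
    rw [Matrix.mul_apply]
    rw [dotProduct, Finset.mul_sum]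
    apply Finset.sum_congr rfl
    intro b _
    rw [Matrix.mul_diagonal, Matrix.transpose_apply, Matrix.mul_apply, Matrix.mulVec]
    simp only [Matrix.transpose_apply, dotProduct]
    ring
  calc ∑ i, (Vᵀ * (Gᵀ * U * Matrix.diagonal σ)).diag i
      = ∑ i, σ i * ((fun a => V a i) ⬝ᵥ (Gᵀ *ᵥ (fun a => U a i))) := by
        exact Finset.sum_congr rfl fun i _ => diagentry i
    _ ≤ ∑ i, σ i * specNorm G := by
        apply Finset.sum_le_sum
        intro i _
        apply mul_le_mul_of_nonneg_left _ (hσ i)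
        have h1 : (fun a => V a i) ⬝ᵥ (Gᵀ *ᵥ (fun a => U a i))
            = (G *ᵥ (fun a => V a i)) ⬝ᵥ (fun a => U a i) := by
          rw [mulVec_dot]
        rw [h1]
        calc (G *ᵥ (fun a => V a i)) ⬝ᵥ (fun a => U a i)
            ≤ |(G *ᵥ (fun a => V a i)) ⬝ᵥ (fun a => U a i)| := le_abs_self _
          _ ≤ vnorm (G *ᵥ (fun a => V a i)) * vnorm (fun a => U a i) := abs_dot_le _ _
          _ ≤ (specNorm G * vnorm (fun a => V a i)) * vnorm (fun a => U a i) := by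
              apply mul_le_mul_of_nonneg_right (spec_mulVec_le _ _) (vnorm_nonneg _)
          _ ≤ (specNorm G * 1) * 1 := by
              apply mul_le_mul
              · exact mul_le_mul_of_nonneg_left (hV i) (specNorm_nonneg G)
              · exact hU i
              · exact vnorm_nonneg _
              · simpa using specNorm_nonneg G
          _ = specNorm G := by ring
    _ = specNorm G * ∑ i, σ i := by rw [Finset.mul_sum]; apply Finset.sum_congr rfl; intros; ring
end Vec

section SVD
variable {n : ℕ}

lemma eq_zero_of_transpose_mul_self_eq_zero {m k : ℕ} {A : Matrix (Fin m) (Fin k) ℝ}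
    (h : Aᵀ * A = 0) : A = 0 := by
  ext i j
  have hd : (Aᵀ * A) j j = ∑ a, A a j * A a j := by
    rw [Matrix.mul_apply]; apply Finset.sum_congr rfl; intros; rw [Matrix.transpose_apply]
  rw [h] at hd
  have h0 : (0 : ℝ) = ∑ a, A a j * A a j := by simpa using hd
  have := (Finset.sum_eq_zero_iff_of_nonneg (fun a _ => mul_self_nonneg (A a j))).mp h0.symm i
    (Finset.mem_univ i)
  simpa [mul_self_eq_zero] using this

lemma col_sum_sq {m k : ℕ} (A : Matrix (Fin m) (Fin k) ℝ) (i : Fin k) :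
    ∑ a, (A a i) ^ 2 = (Aᵀ * A) i i := by
  rw [Matrix.mul_apply]; apply Finset.sum_congr rfl; intros a _
  rw [Matrix.transpose_apply, pow_two]

lemma vnorm_col_le_one {m k : ℕ} {A : Matrix (Fin m) (Fin k) ℝ} {i : Fin k}
    (h : (Aᵀ * A) i i ≤ 1) : vnorm (fun a => A a i) ≤ 1 := by
  rw [vnorm]
  have h2 : ∑ a, (A a i) ^ 2 ≤ 1 := by rw [col_sum_sq]; exact h
  calc Real.sqrt (∑ a, (A a i) ^ 2) ≤ Real.sqrt 1 := Real.sqrt_le_sqrt h2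
    _ = 1 := Real.sqrt_one

/-- The master SVD package for a square real matrix. -/
theorem svd_package (X : Matrix (Fin n) (Fin n) ℝ) :
    (∃ (Ux Vx : Matrix (Fin n) (Fin n) ℝ) (s : Fin n → ℝ),
      (∀ i, 0 ≤ s i) ∧ X = Ux * Matrix.diagonal s * Vxᵀ ∧
      (∀ i, vnorm (fun a => Ux a i) ≤ 1) ∧ (∀ i, vnorm (fun a => Vx a i) ≤ 1) ∧
      (∑ i, s i) = nuclearNorm X) ∧
    (∃ G C : Matrix (Fin n) (Fin n) ℝ,
      G = X * C ∧
      ((Gᵀ * G)ᵀ = Gᵀ * G ∧ (Gᵀ * G) * (Gᵀ * G) = Gᵀ * G) ∧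
      finner G X = nuclearNorm X ∧
      (∀ r (V : Matrix (Fin n) (Fin r) ℝ), X * V = 0 → G * V = 0)) := by
  classical
  set hH : (Xᵀ * X).IsHermitian := (by
    simpa [Matrix.conjTranspose_eq_transpose_of_trivial] using
      Matrix.isHermitian_conjTranspose_mul_self X) with hhH
  set μ : Fin n → ℝ := hH.eigenvalues with hμdef
  have hμ0 : ∀ i, 0 ≤ μ i := fun i => Matrix.eigenvalues_conjTranspose_mul_self_nonneg X i
  set Vx : Matrix (Fin n) (Fin n) ℝ :=
    (Matrix.IsHermitian.eigenvectorUnitary hH : Matrix (Fin n) (Fin n) ℝ) with hVx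
  have hVtV : Vxᵀ * Vx = 1 := by
    have := (Matrix.mem_unitaryGroup_iff').mp (Matrix.IsHermitian.eigenvectorUnitary hH).2
    simpa [Matrix.star_eq_conjTranspose, Matrix.conjTranspose_eq_transpose_of_trivial] using this
  have hVVt : Vx * Vxᵀ = 1 := mul_eq_one_comm.mp hVtV
  have hXtX : Xᵀ * X = Vx * Matrix.diagonal μ * Vxᵀ := by
    have hsp := hH.spectral_theorem
    rw [show Xᵀ = Xᴴ from (Matrix.conjTranspose_eq_transpose_of_trivial X).symm]
    simpa [Matrix.star_eq_conjTranspose, Matrix.conjTranspose_eq_transpose_of_trivial,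
      RCLike.ofReal_real_eq_id, Function.comp] using hsp
  set D : (Fin n → ℝ) → Matrix (Fin n) (Fin n) ℝ := fun f => Vx * Matrix.diagonal f * Vxᵀ with hD
  have hDD : ∀ f g, D f * D g = D (fun i => f i * g i) := by
    intro f g
    show Vx * Matrix.diagonal f * Vxᵀ * (Vx * Matrix.diagonal g * Vxᵀ)
        = Vx * Matrix.diagonal (fun i => f i * g i) * Vxᵀ
    have h1 : Vxᵀ * (Vx * (Matrix.diagonal g * Vxᵀ)) = Matrix.diagonal g * Vxᵀ := by
      rw [← Matrix.mul_assoc, hVtV, Matrix.one_mul]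
    simp only [Matrix.mul_assoc]
    rw [h1, ← Matrix.mul_assoc (Matrix.diagonal f), Matrix.diagonal_mul_diagonal]
  have hDsym : ∀ f, (D f)ᵀ = D f := by
    intro f
    show (Vx * Matrix.diagonal f * Vxᵀ)ᵀ = Vx * Matrix.diagonal f * Vxᵀ
    rw [Matrix.transpose_mul, Matrix.transpose_mul, Matrix.transpose_transpose,
      Matrix.diagonal_transpose, Matrix.mul_assoc]
  have htraceD : ∀ f, Matrix.trace (D f) = ∑ i, f i := by
    intro f
    show Matrix.trace (Vx * Matrix.diagonal f * Vxᵀ) = _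
    rw [Matrix.trace_mul_comm, ← Matrix.mul_assoc, hVtV, Matrix.one_mul, Matrix.trace_diagonal]
  have hDcong : ∀ {f g : Fin n → ℝ}, f = g → D f = D g := by
    intro f g h; rw [h]
  have hXtXD : Xᵀ * X = D μ := by rw [hXtX]
  set s : Fin n → ℝ := fun i => Real.sqrt (μ i) with hs
  have hs0 : ∀ i, 0 ≤ s i := fun i => Real.sqrt_nonneg _
  have hssq : ∀ i, s i ^ 2 = μ i := fun i => Real.sq_sqrt (hμ0 i)
  have hsne : ∀ i, μ i ≠ 0 → s i ≠ 0 := by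
    intro i h
    have : 0 < μ i := lt_of_le_of_ne (hμ0 i) (Ne.symm h)
    exact ne_of_gt (Real.sqrt_pos.mpr this)
  have hnuc : nuclearNorm X = ∑ i, s i := rfl
  set d : Fin n → ℝ := fun i => if μ i = 0 then 0 else (s i)⁻¹ with hd
  set e : Fin n → ℝ := fun i => if μ i = 0 then 0 else 1 with he
  have hdμd : (fun i => (fun j => d j * μ j) i * d i) = e := by
    funext i
    by_cases h : μ i = 0
    · simp [hd, he, h]
    · simp only [hd, he, if_neg h]
      rw [← hssq i]
      have hne := hsne i h
      field_simp
  have hdμ : (fun i => d i * μ i) = s := by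
    funext i
    by_cases h : μ i = 0
    · simp [hd, hs, h]
    · simp only [hd, if_neg h]
      rw [← hssq i]
      have hne := hsne i h
      field_simp
  have hds : (fun i => d i * s i) = e := by
    funext i
    by_cases h : μ i = 0
    · simp [hd, he, h]
    · simp only [hd, he, if_neg h]
      rw [inv_mul_cancel₀ (hsne i h)]
  have hee : (fun i => e i * e i) = e := by
    funext i; by_cases h : μ i = 0 <;> simp [he, h]
  -- X * D e = X
  have hXVe : X * D e = X := by
    set e' : Fin n → ℝ := fun i => 1 - e i with he'
    have hM0 : X * (Vx * Matrix.diagonal e') = 0 := by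
      apply eq_zero_of_transpose_mul_self_eq_zero
      have hexp : (X * (Vx * Matrix.diagonal e'))ᵀ * (X * (Vx * Matrix.diagonal e'))
          = Matrix.diagonal e' * (Vxᵀ * ((Xᵀ * X) * (Vx * Matrix.diagonal e'))) := by
        rw [Matrix.transpose_mul, Matrix.transpose_mul, Matrix.diagonal_transpose]
        simp only [Matrix.mul_assoc]
      rw [hexp, hXtX]
      have hmid : Vxᵀ * ((Vx * Matrix.diagonal μ * Vxᵀ) * (Vx * Matrix.diagonal e'))
          = Matrix.diagonal μ * Matrix.diagonal e' := by
        simp only [Matrix.mul_assoc]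
        rw [← Matrix.mul_assoc Vxᵀ Vx, hVtV, Matrix.one_mul, ← Matrix.mul_assoc Vxᵀ Vx, hVtV,
          Matrix.one_mul]
      rw [hmid, Matrix.diagonal_mul_diagonal, Matrix.diagonal_mul_diagonal]
      have hz : (fun i => e' i * (μ i * e' i)) = fun _ => (0 : ℝ) := by
        funext i
        by_cases h : μ i = 0 <;> simp [he', he, h]
      rw [hz]
      simp
    have hsplit : X * (Vx * Matrix.diagonal e) = X * Vx := by
      have hsum : Matrix.diagonal e + Matrix.diagonal e' = 1 := by
        rw [Matrix.diagonal_add, ← Matrix.diagonal_one]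
        congr 1
        funext i; simp [he']
      calc X * (Vx * Matrix.diagonal e)
          = X * (Vx * Matrix.diagonal e) + X * (Vx * Matrix.diagonal e') := by rw [hM0, add_zero]
        _ = X * (Vx * Matrix.diagonal e + Vx * Matrix.diagonal e') := by rw [← Matrix.mul_add]
        _ = X * (Vx * (Matrix.diagonal e + Matrix.diagonal e')) := by rw [← Matrix.mul_add]
        _ = X * Vx := by rw [hsum, Matrix.mul_one]
    show X * (Vx * Matrix.diagonal e * Vxᵀ) = X
    calc X * (Vx * Matrix.diagonal e * Vxᵀ) = X * (Vx * Matrix.diagonal e) * Vxᵀ := by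
          rw [← Matrix.mul_assoc, ← Matrix.mul_assoc]
      _ = X * Vx * Vxᵀ := by rw [hsplit]
      _ = X := by rw [Matrix.mul_assoc, hVVt, Matrix.mul_one]
  -- the two star objects
  set Ux : Matrix (Fin n) (Fin n) ℝ := X * (Vx * Matrix.diagonal d) with hUx
  set G : Matrix (Fin n) (Fin n) ℝ := X * D d with hG
  -- Uxᵀ * Ux = diagonal e
  have hUtU : Uxᵀ * Ux = Matrix.diagonal e := by
    have hexp : Uxᵀ * Ux = Matrix.diagonal d * (Vxᵀ * ((Xᵀ * X) * (Vx * Matrix.diagonal d))) := by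
      rw [hUx, Matrix.transpose_mul, Matrix.transpose_mul, Matrix.diagonal_transpose]
      simp only [Matrix.mul_assoc]
    rw [hexp, hXtX]
    have hmid : Vxᵀ * ((Vx * Matrix.diagonal μ * Vxᵀ) * (Vx * Matrix.diagonal d))
        = Matrix.diagonal μ * Matrix.diagonal d := by
      simp only [Matrix.mul_assoc]
      rw [← Matrix.mul_assoc Vxᵀ Vx, hVtV, Matrix.one_mul, ← Matrix.mul_assoc Vxᵀ Vx, hVtV,
        Matrix.one_mul]
    rw [hmid, Matrix.diagonal_mul_diagonal, Matrix.diagonal_mul_diagonal]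
    refine congrArg Matrix.diagonal (funext fun i => ?_)
    by_cases h : μ i = 0
    · simp [hd, he, h]
    · simp only [hd, he, if_neg h]
      rw [← hssq i]
      have hne := hsne i h
      field_simp
  constructor
  · -- SVD factorization part
    refine ⟨Ux, Vx, s, hs0, ?_, ?_, ?_, hnuc.symm⟩
    · -- X = Ux * diagonal s * Vxᵀ
      have : Ux * Matrix.diagonal s * Vxᵀ = X * (Vx * (Matrix.diagonal d * Matrix.diagonal s)) * Vxᵀ := by
        rw [hUx]; simp only [Matrix.mul_assoc]
      rw [this, Matrix.diagonal_mul_diagonal, hds]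
      have : X * (Vx * Matrix.diagonal e) * Vxᵀ = X * D e := by
        show _ = X * (Vx * Matrix.diagonal e * Vxᵀ)
        simp only [Matrix.mul_assoc]
      rw [this, hXVe]
    · intro i
      apply vnorm_col_le_one
      rw [hUtU, Matrix.diagonal_apply_eq]
      by_cases h : μ i = 0 <;> simp [he, h]
    · intro i
      apply vnorm_col_le_one
      rw [hVtV]
      simp
  · -- dual certificate part
    refine ⟨G, D d, rfl, ?_, ?_, ?_⟩
    · -- GᵀG symmetric idempotent
      have hGtG : Gᵀ * G = D e := by
        have hexp : Gᵀ * G = D d * ((Xᵀ * X) * D d) := by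
          rw [hG, Matrix.transpose_mul, hDsym]
          simp only [Matrix.mul_assoc]
        rw [hexp, hXtXD, hDD μ d, hDD d (fun i => μ i * d i)]
        apply hDcong
        funext i
        have := congrFun hdμd i
        simpa only [mul_assoc] using this
      constructor
      · rw [hGtG]; exact hDsym e
      · rw [hGtG, hDD]
        exact hDcong hee
    · -- finner G X = nuclearNorm X
      have hGt : Gᵀ = D d * Xᵀ := by rw [hG, Matrix.transpose_mul, hDsym]
      have hGX : Gᵀ * X = D d * (Xᵀ * X) := by rw [hGt, Matrix.mul_assoc]
      rw [show finner G X = Matrix.trace (Gᵀ * X) from ?_, hGX, hXtXD, hDD d μ]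
      · rw [htraceD, hnuc]
        exact Finset.sum_congr rfl fun i _ => congrFun hdμ i
      · -- finner = trace
        rw [finner, Matrix.trace]
        rw [Finset.sum_comm]
        apply Finset.sum_congr rfl
        intro j _
        simp [Matrix.diag, Matrix.mul_apply, Matrix.transpose_apply]
    · -- annihilation
      intro r V hXV
      set g : Fin n → ℝ := fun i => if μ i = 0 then 0 else (s i)⁻¹ * (μ i)⁻¹ with hg
      have hgμ : (fun i => g i * μ i) = d := by
        funext i
        by_cases h : μ i = 0
        · simp [hg, hd, h]
        · simp only [hg, hd, if_neg h]
          rw [mul_assoc, inv_mul_cancel₀ h, mul_one]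
      have hDg : D d = D g * (Xᵀ * X) := by
        rw [hXtXD, hDD]
        exact (hDcong hgμ).symm
      have : G * V = X * D g * Xᵀ * (X * V) := by
        rw [hG, hDg]
        simp only [Matrix.mul_assoc]
      rw [this, hXV, Matrix.mul_zero]
end SVD

section Proj
variable {n : ℕ} (Ω : Set (Fin n × Fin n))

lemma projSet_apply (A : Matrix (Fin n) (Fin n) ℝ) (i j : Fin n) :
    projSet Ω A i j = if (i, j) ∈ Ω then A i j else 0 := by
  rw [projSet, Set.indicator_apply]

lemma projSet_add (A B : Matrix (Fin n) (Fin n) ℝ) :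
    projSet Ω (A + B) = projSet Ω A + projSet Ω B := by
  ext i j
  simp only [projSet_apply, Matrix.add_apply]
  split <;> simp

lemma projSet_sub (A B : Matrix (Fin n) (Fin n) ℝ) :
    projSet Ω (A - B) = projSet Ω A - projSet Ω B := by
  ext i j
  simp only [projSet_apply, Matrix.sub_apply]
  split <;> simp

lemma projSet_smul (c : ℝ) (A : Matrix (Fin n) (Fin n) ℝ) :
    projSet Ω (c • A) = c • projSet Ω A := by
  ext i j
  simp only [projSet_apply, Matrix.smul_apply, smul_eq_mul]
  split <;> simp

lemma finner_proj_compl (A B : Matrix (Fin n) (Fin n) ℝ) :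
    finner (projSet Ω A) (B - projSet Ω B) = 0 := by
  rw [finner]
  apply Finset.sum_eq_zero; intro i _
  apply Finset.sum_eq_zero; intro j _
  simp only [Matrix.sub_apply, projSet_apply]
  split <;> simp

lemma finner_split (A B : Matrix (Fin n) (Fin n) ℝ) :
    finner A B = finner (projSet Ω A) (projSet Ω B)
      + finner (A - projSet Ω A) (B - projSet Ω B) := by
  rw [finner, finner, finner]
  rw [← Finset.sum_add_distrib]
  apply Finset.sum_congr rfl; intro i _
  rw [← Finset.sum_add_distrib]
  apply Finset.sum_congr rfl; intro j _
  simp only [Matrix.sub_apply, projSet_apply]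
  split <;> simp

lemma frob_projSet_le (A : Matrix (Fin n) (Fin n) ℝ) :
    frobNorm (projSet Ω A) ≤ frobNorm A := by
  rw [frobNorm, frobNorm]
  apply Real.sqrt_le_sqrt
  apply Finset.sum_le_sum; intro i _
  apply Finset.sum_le_sum; intro j _
  rw [projSet_apply]
  split
  · exact le_rfl
  · simpa using sq_nonneg (A i j)

lemma l1_proj_compl_eq (A : Matrix (Fin n) (Fin n) ℝ) :
    l1Norm (A - projSet Ω A) = ∑ i, ∑ j, (if (i, j) ∈ Ω then 0 else |A i j|) := by
  rw [l1Norm]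
  apply Finset.sum_congr rfl; intro i _
  apply Finset.sum_congr rfl; intro j _
  simp only [Matrix.sub_apply, projSet_apply]
  split <;> simp

end Proj

section LinfL1
variable {m k : ℕ}

lemma l1Norm_nonneg (A : Matrix (Fin m) (Fin k) ℝ) : 0 ≤ l1Norm A := by
  apply Finset.sum_nonneg; intro i _
  exact Finset.sum_nonneg fun j _ => abs_nonneg _

lemma linfNorm_nonneg (A : Matrix (Fin m) (Fin k) ℝ) : 0 ≤ linfNorm A := by
  apply Real.iSup_nonneg; intro i
  apply Real.iSup_nonneg; intro j
  exact abs_nonneg _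

lemma abs_le_linfNorm [NeZero m] [NeZero k] (A : Matrix (Fin m) (Fin k) ℝ) (i : Fin m) (j : Fin k) :
    |A i j| ≤ linfNorm A := by
  have h1 : |A i j| ≤ ⨆ j', |A i j'| :=
    le_ciSup (f := fun j' => |A i j'|) (Set.Finite.bddAbove (Set.finite_range _)) j
  refine h1.trans ?_
  exact le_ciSup (f := fun i' => ⨆ j', |A i' j'|) (Set.Finite.bddAbove (Set.finite_range _)) i

lemma frobNorm_le_l1Norm (A : Matrix (Fin m) (Fin k) ℝ) : frobNorm A ≤ l1Norm A := by
  rw [frobNorm]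
  have h : ∑ i, ∑ j, (A i j) ^ 2 ≤ (l1Norm A) ^ 2 := by
    have hterm : ∀ i j, (A i j) ^ 2 ≤ |A i j| * l1Norm A := by
      intro i j
      rw [pow_two, ← abs_mul_abs_self (A i j)]
      apply mul_le_mul_of_nonneg_left _ (abs_nonneg _)
      calc |A i j| ≤ ∑ j', |A i j'| := by
            apply Finset.single_le_sum (fun j' _ => abs_nonneg (A i j')) (Finset.mem_univ j)
        _ ≤ l1Norm A := by
            apply Finset.single_le_sum (f := fun i => ∑ j', |A i j'|)
              (fun i' _ => Finset.sum_nonneg fun j' _ => abs_nonneg _) (Finset.mem_univ i)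
    calc ∑ i, ∑ j, (A i j) ^ 2 ≤ ∑ i, ∑ j, |A i j| * l1Norm A := by
          apply Finset.sum_le_sum; intro i _
          exact Finset.sum_le_sum fun j _ => hterm i j
      _ = (l1Norm A) ^ 2 := by
          rw [l1Norm, pow_two, Finset.sum_mul]
          apply Finset.sum_congr rfl; intros
          rw [Finset.sum_mul]
  calc Real.sqrt (∑ i, ∑ j, (A i j) ^ 2) ≤ Real.sqrt ((l1Norm A) ^ 2) := Real.sqrt_le_sqrt h
    _ = |l1Norm A| := Real.sqrt_sq_eq_abs _
    _ = l1Norm A := abs_of_nonneg (l1Norm_nonneg A)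

lemma l1Norm_eq_zero {A : Matrix (Fin m) (Fin k) ℝ} (h : l1Norm A = 0) : A = 0 := by
  ext i j
  have hnn : ∀ p ∈ (Finset.univ : Finset (Fin m)), 0 ≤ ∑ q, |A p q| :=
    fun p _ => Finset.sum_nonneg fun q _ => abs_nonneg _
  have hrow := (Finset.sum_eq_zero_iff_of_nonneg hnn).mp h i (Finset.mem_univ i)
  have := (Finset.sum_eq_zero_iff_of_nonneg (fun q _ => abs_nonneg (A i q))).mp hrow j
    (Finset.mem_univ j)
  simpa [abs_eq_zero] using this

lemma abs_finner_le_linf_mul_l1 [NeZero m] [NeZero k] (A B : Matrix (Fin m) (Fin k) ℝ) :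
    |finner A B| ≤ linfNorm A * l1Norm B := by
  rw [finner]
  calc |∑ i, ∑ j, A i j * B i j| ≤ ∑ i, |∑ j, A i j * B i j| := Finset.abs_sum_le_sum_abs _ _
    _ ≤ ∑ i, ∑ j, |A i j * B i j| := by
        apply Finset.sum_le_sum; intro i _; exact Finset.abs_sum_le_sum_abs _ _
    _ ≤ ∑ i, ∑ j, linfNorm A * |B i j| := by
        apply Finset.sum_le_sum; intro i _
        apply Finset.sum_le_sum; intro j _
        rw [abs_mul]
        exact mul_le_mul_of_nonneg_right (abs_le_linfNorm A i j) (abs_nonneg _)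
    _ = linfNorm A * l1Norm B := by
        rw [l1Norm, Finset.mul_sum]
        apply Finset.sum_congr rfl; intros; rw [Finset.mul_sum]
end LinfL1

section Glue
variable {m k n r : ℕ}

lemma finner_zero_left (A : Matrix (Fin m) (Fin k) ℝ) : finner 0 A = 0 := by
  rw [finner_comm, finner_zero_right]

lemma finner_smul_left (c : ℝ) (A B : Matrix (Fin m) (Fin k) ℝ) :
    finner (c • A) B = c * finner A B := by
  rw [finner_comm, finner_smul_right, finner_comm]

lemma finner_self_eq_zero {A : Matrix (Fin m) (Fin k) ℝ} (h : finner A A = 0) : A = 0 := by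
  apply frobNorm_eq_zero
  rw [frobNorm_eq_sqrt_finner, h, Real.sqrt_zero]

lemma nuclearNorm_nonneg (A : Matrix (Fin m) (Fin k) ℝ) : 0 ≤ nuclearNorm A :=
  Finset.sum_nonneg fun i _ => Real.sqrt_nonneg _

lemma quad_le' {P : Matrix (Fin k) (Fin k) ℝ} (hPs : Pᵀ = P) (hPi : P * P = P) (x : Fin k → ℝ) :
    x ⬝ᵥ (P *ᵥ x) ≤ x ⬝ᵥ x := by
  have h := quad_le (Q := (0 : Matrix (Fin k) (Fin k) ℝ)) hPs hPi (by simp) (by simp) (by simp) x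
  simpa using h

lemma specNorm_le_one_of_sym_idem {G : Matrix (Fin k) (Fin k) ℝ}
    (hs : (Gᵀ * G)ᵀ = Gᵀ * G) (hi : (Gᵀ * G) * (Gᵀ * G) = Gᵀ * G) : specNorm G ≤ 1 :=
  specNorm_le_one_of_quad (fun x => quad_le' hs hi x)

lemma finner_le_spec_mul_nuclear (Y X : Matrix (Fin n) (Fin n) ℝ) :
    finner Y X ≤ specNorm Y * nuclearNorm X := by
  obtain ⟨⟨Ux, Vx, s, hs0, hfac, hUc, hVc, hsum⟩, _⟩ := svd_package X
  calc finner Y X = finner Y (Ux * Matrix.diagonal s * Vxᵀ) := by rw [← hfac]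
    _ ≤ specNorm Y * ∑ i, s i := finner_factored_le Y Ux Vx s hs0 hUc hVc
    _ = specNorm Y * nuclearNorm X := by rw [hsum]

lemma abs_finner_le_spec_mul_nuclear (Y X : Matrix (Fin n) (Fin n) ℝ) :
    |finner Y X| ≤ specNorm Y * nuclearNorm X := by
  rcases abs_cases (finner Y X) with ⟨h, _⟩ | ⟨h, _⟩
  · rw [h]; exact finner_le_spec_mul_nuclear Y X
  · rw [h]
    have := finner_le_spec_mul_nuclear (-Y) X
    rwa [finner_neg_left, specNorm_neg] at this

lemma specNorm_le_frobNorm (A : Matrix (Fin m) (Fin k) ℝ) : specNorm A ≤ frobNorm A := by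
  apply specNorm_le_of (frobNorm_nonneg A)
  intro v
  have hsq : vnorm (A *ᵥ v) ^ 2 ≤ (frobNorm A * vnorm v) ^ 2 := by
    rw [vnorm_sq]
    have hterm : ∀ i, (A *ᵥ v) i * (A *ᵥ v) i ≤ (∑ j, (A i j) ^ 2) * (∑ j, (v j) ^ 2) := by
      intro i
      have := Finset.sum_mul_sq_le_sq_mul_sq (Finset.univ : Finset (Fin k)) (A i) v
      calc (A *ᵥ v) i * (A *ᵥ v) i = (∑ j, A i j * v j) ^ 2 := by
            rw [pow_two]; rfl
        _ ≤ _ := this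
    calc (A *ᵥ v) ⬝ᵥ (A *ᵥ v) ≤ ∑ i, (∑ j, (A i j) ^ 2) * (∑ j, (v j) ^ 2) :=
          Finset.sum_le_sum fun i _ => hterm i
      _ = (∑ i, ∑ j, (A i j) ^ 2) * (∑ j, (v j) ^ 2) := by rw [Finset.sum_mul]
      _ = (frobNorm A * vnorm v) ^ 2 := by
          rw [mul_pow, frobNorm, vnorm, Real.sq_sqrt, Real.sq_sqrt]
          · exact Finset.sum_nonneg fun j _ => sq_nonneg _
          · exact Finset.sum_nonneg fun i _ => Finset.sum_nonneg fun j _ => sq_nonneg _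
  have h1 := vnorm_nonneg (A *ᵥ v)
  have h2 : 0 ≤ frobNorm A * vnorm v := mul_nonneg (frobNorm_nonneg A) (vnorm_nonneg v)
  nlinarith

lemma frobNorm_le_nuclearNorm (X : Matrix (Fin n) (Fin n) ℝ) : frobNorm X ≤ nuclearNorm X := by
  have h := finner_le_spec_mul_nuclear X X
  have h2 : specNorm X ≤ frobNorm X := specNorm_le_frobNorm X
  have h3 : frobNorm X ^ 2 = finner X X := sq_frobNorm X
  have h4 := frobNorm_nonneg X
  have h5 := nuclearNorm_nonneg X
  by_cases h0 : frobNorm X = 0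
  · rw [h0]; exact h5
  · have hpos : 0 < frobNorm X := lt_of_le_of_ne h4 (Ne.symm h0)
    nlinarith

lemma trace_mul_transpose_eq_finner (M Q : Matrix (Fin m) (Fin k) ℝ) :
    Matrix.trace (M * Qᵀ) = finner M Q := by
  rw [Matrix.trace, finner]
  apply Finset.sum_congr rfl
  intro i _
  simp [Matrix.diag, Matrix.mul_apply, Matrix.transpose_apply]

lemma finner_mul_Qt (Z : Matrix (Fin n) (Fin n) ℝ) (U Q : Matrix (Fin n) (Fin r) ℝ) :
    finner Z (U * Qᵀ) = finner (Zᵀ * U) Q := by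
  rw [finner_eq_trace, ← Matrix.mul_assoc, trace_mul_transpose_eq_finner]

lemma finner_mul_Vt (Z : Matrix (Fin n) (Fin n) ℝ) (R V : Matrix (Fin n) (Fin r) ℝ) :
    finner Z (R * Vᵀ) = finner R (Z * V) := by
  calc finner Z (R * Vᵀ) = Matrix.trace (Zᵀ * (R * Vᵀ)) := finner_eq_trace _ _
    _ = Matrix.trace ((Zᵀ * R) * Vᵀ) := by rw [Matrix.mul_assoc]
    _ = finner (Zᵀ * R) V := trace_mul_transpose_eq_finner _ _
    _ = Matrix.trace ((Zᵀ * R)ᵀ * V) := finner_eq_trace _ _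
    _ = Matrix.trace (Rᵀ * (Z * V)) := by
        rw [Matrix.transpose_mul, Matrix.transpose_transpose, Matrix.mul_assoc]
    _ = finner R (Z * V) := (finner_eq_trace _ _).symm

lemma orthT_extract {U V : Matrix (Fin n) (Fin r) ℝ} {Z : Matrix (Fin n) (Fin n) ℝ}
    (h : ∀ Y ∈ Tspace U V, finner Z Y = 0) : Uᵀ * Z = 0 ∧ Z * V = 0 := by
  constructor
  · have hmem : U * (Zᵀ * U)ᵀ ∈ Tspace U V := by
      exact ⟨Zᵀ * U, 0, by rw [Matrix.zero_mul, add_zero]⟩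
    have h0 := h _ hmem
    rw [finner_mul_Qt] at h0
    have := finner_self_eq_zero h0
    have h2 := congrArg Matrix.transpose this
    rwa [Matrix.transpose_mul, Matrix.transpose_transpose, Matrix.transpose_zero] at h2
  · have hmem : (Z * V) * Vᵀ ∈ Tspace U V := by
      refine ⟨0, Z * V, by rw [Matrix.transpose_zero, Matrix.mul_zero, zero_add]⟩
    have h0 := h _ hmem
    rw [finner_mul_Vt] at h0
    exact finner_self_eq_zero h0

lemma orthT_of {U V : Matrix (Fin n) (Fin r) ℝ} {Z : Matrix (Fin n) (Fin n) ℝ}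
    (hU0 : Uᵀ * Z = 0) (hV0 : Z * V = 0) : ∀ Y ∈ Tspace U V, finner Z Y = 0 := by
  rintro Y ⟨Q, R, rfl⟩
  rw [finner_add_right, finner_mul_Qt, finner_mul_Vt, hV0, finner_zero_right]
  have hZU : Zᵀ * U = 0 := by
    have h2 := congrArg Matrix.transpose hU0
    rwa [Matrix.transpose_mul, Matrix.transpose_transpose, Matrix.transpose_zero] at h2
  rw [hZU, finner_zero_left, add_zero]

lemma sgn_proj {n : ℕ} (S0 : Matrix (Fin n) (Fin n) ℝ) :
    projSet (suppSet S0) (sgnMat S0) = sgnMat S0 := by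
  ext i j
  rw [projSet_apply]
  split
  · rfl
  · next hmem =>
    have h0 : S0 i j = 0 := by
      by_contra hne
      exact hmem hne
    show (0 : ℝ) = Real.sign (S0 i j)
    rw [h0, Real.sign_zero]

lemma l1_subgrad {n : ℕ} (S0 H : Matrix (Fin n) (Fin n) ℝ) :
    l1Norm S0 - finner (sgnMat S0) H + l1Norm (H - projSet (suppSet S0) H)
      ≤ l1Norm (S0 - H) := by
  have hpt : ∀ i j, |S0 i j| - Real.sign (S0 i j) * H i j
      + (if (i, j) ∈ suppSet S0 then 0 else |H i j|) ≤ |S0 i j - H i j| := by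
    intro i j
    by_cases h0 : S0 i j = 0
    · have hnotmem : (i, j) ∉ suppSet S0 := by
        intro hmem; exact hmem h0
      rw [if_neg hnotmem, h0]
      simp
    · have hmem : (i, j) ∈ suppSet S0 := h0
      rw [if_pos hmem, add_zero]
      rcases lt_trichotomy (S0 i j) 0 with h | h | h
      · rw [Real.sign_of_neg h, abs_of_neg h]
        have : -(S0 i j - H i j) ≤ |S0 i j - H i j| := neg_le_abs _
        linarith
      · exact absurd h h0
      · rw [Real.sign_of_pos h, abs_of_pos h]
        have : S0 i j - H i j ≤ |S0 i j - H i j| := le_abs_self _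
        linarith
  have hRHS : l1Norm (S0 - H) = ∑ i, ∑ j, |S0 i j - H i j| := by
    rw [l1Norm]
    apply Finset.sum_congr rfl; intro i _
    apply Finset.sum_congr rfl; intro j _
    rw [Matrix.sub_apply]
  rw [hRHS, l1Norm, finner, l1_proj_compl_eq, ← Finset.sum_sub_distrib, ← Finset.sum_add_distrib]
  apply Finset.sum_le_sum
  intro i _
  rw [← Finset.sum_sub_distrib, ← Finset.sum_add_distrib]
  apply Finset.sum_le_sum
  intro j _
  exact hpt i j

end Glue

/-- Lemma 2.5: dual certificate implies exact recovery.
Assume ‖P_Ω P_T‖ ≤ 1/2 and λ < 1. If there exists W with P_T W = 0, ‖W‖ < 1/2,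
‖P_Ω(UV* − λ sgn(S₀) + W)‖_F ≤ λ/4 and ‖P_{Ω⊥}(UV* + W)‖_∞ < λ/2, then (L₀, S₀) is
the unique optimal solution of min ‖L‖_* + λ‖S‖₁ s.t. L + S = L₀ + S₀. -/
theorem stmt2 {n r : ℕ} (L0 S0 : Matrix (Fin n) (Fin n) ℝ)
    (U V : Matrix (Fin n) (Fin r) ℝ) (σ : Fin r → ℝ)
    -- compact SVD of L₀
    (hU : Uᵀ * U = 1) (hV : Vᵀ * V = 1) (hσ : ∀ i, 0 < σ i)
    (hSVD : L0 = U * Matrix.diagonal σ * Vᵀ) (hrank : L0.rank = r)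
    -- P_T is the orthogonal projection onto T
    (PT : Matrix (Fin n) (Fin n) ℝ →ₗ[ℝ] Matrix (Fin n) (Fin n) ℝ)
    (hPT : IsOrthProjOnto PT (Tspace U V))
    (lam : ℝ) (hlam : lam < 1)
    -- ‖P_Ω P_T‖ ≤ 1/2
    (hop : ∀ X : Matrix (Fin n) (Fin n) ℝ,
      frobNorm (projSet (suppSet S0) (PT X)) ≤ (1 / 2) * frobNorm X)
    -- the dual certificate W
    (W : Matrix (Fin n) (Fin n) ℝ)
    (hW1 : PT W = 0) (hW2 : specNorm W < 1 / 2)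
    (hW3 : frobNorm (projSet (suppSet S0) (U * Vᵀ - lam • sgnMat S0 + W)) ≤ lam / 4)
    (hW4 : linfNorm ((U * Vᵀ + W) - projSet (suppSet S0) (U * Vᵀ + W)) < lam / 2) :
    ∀ L S : Matrix (Fin n) (Fin n) ℝ, L + S = L0 + S0 → (L, S) ≠ (L0, S0) →
      nuclearNorm L0 + lam * l1Norm S0 < nuclearNorm L + lam * l1Norm S := by
  intro L S hLS hne
  by_cases hn : n = 0
  · exfalso
    apply hne
    subst hn
    have hL0 : L = L0 := by ext i j; exact i.elim0
    have hS0 : S = S0 := by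
      have h := hLS
      rw [hL0] at h
      exact add_left_cancel h
    rw [hL0, hS0]
  haveI : NeZero n := ⟨hn⟩
  set Ω := suppSet S0 with hΩ
  set H : Matrix (Fin n) (Fin n) ℝ := L - L0 with hHdef
  have hL : L = L0 + H := by rw [hHdef]; abel
  have hS : S = S0 - H := by
    have h1 : S = L0 + S0 - L := by rw [← hLS]; abel
    rw [h1, hHdef]; abel
  set PTpH : Matrix (Fin n) (Fin n) ℝ := H - PT H with hPTp
  set a := nuclearNorm PTpH with ha
  set b := l1Norm (H - projSet Ω H) with hb
  have ha0 : 0 ≤ a := by rw [ha]; exact nuclearNorm_nonneg _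
  have hb0 : 0 ≤ b := by rw [hb]; exact l1Norm_nonneg _
  have hlam0 : 0 < lam := by
    have h := linfNorm_nonneg ((U * Vᵀ + W) - projSet Ω (U * Vᵀ + W))
    linarith
  -- orthogonality structure
  have hTperp : ∀ Y ∈ Tspace U V, finner PTpH Y = 0 := fun Y hY => hPT.2.2 H Y hY
  obtain ⟨hUtP, hPV⟩ := orthT_extract hTperp
  obtain ⟨_, W0, C, hW0C, ⟨hsym, hidem⟩, hW0X, hann⟩ := svd_package PTpH
  have hUtW0 : Uᵀ * W0 = 0 := by rw [hW0C, ← Matrix.mul_assoc, hUtP, Matrix.zero_mul]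
  have hW0V : W0 * V = 0 := hann r V hPV
  have hW0T : ∀ Y ∈ Tspace U V, finner W0 Y = 0 := orthT_of hUtW0 hW0V
  have hWT : ∀ Y ∈ Tspace U V, finner W Y = 0 := by
    intro Y hY
    have h := hPT.2.2 W Y hY
    rwa [hW1, sub_zero] at h
  have hfsplit : ∀ Z : Matrix (Fin n) (Fin n) ℝ,
      finner Z H = finner Z PTpH + finner Z (PT H) := by
    intro Z
    rw [← finner_add_right]
    congr 1
    rw [hPTp]; abel
  -- spectral norm bounds
  have hVVt_sym : (V * Vᵀ)ᵀ = V * Vᵀ := by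
    rw [Matrix.transpose_mul, Matrix.transpose_transpose]
  have hVVt_idem : (V * Vᵀ) * (V * Vᵀ) = V * Vᵀ := by
    rw [Matrix.mul_assoc, ← Matrix.mul_assoc Vᵀ V, hV, Matrix.one_mul]
  have hW0tU : W0ᵀ * U = 0 := by
    have h2 := congrArg Matrix.transpose hUtW0
    rwa [Matrix.transpose_mul, Matrix.transpose_transpose, Matrix.transpose_zero] at h2
  have hVtW0t : Vᵀ * W0ᵀ = 0 := by
    have h2 := congrArg Matrix.transpose hW0V
    rwa [Matrix.transpose_mul, Matrix.transpose_zero] at h2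
  have hquadUVW0 : (U * Vᵀ + W0)ᵀ * (U * Vᵀ + W0) = V * Vᵀ + W0ᵀ * W0 := by
    rw [Matrix.transpose_add, Matrix.transpose_mul, Matrix.transpose_transpose]
    rw [Matrix.add_mul, Matrix.mul_add, Matrix.mul_add]
    have e1 : V * Uᵀ * (U * Vᵀ) = V * Vᵀ := by
      rw [Matrix.mul_assoc, ← Matrix.mul_assoc Uᵀ U, hU, Matrix.one_mul]
    have e2 : V * Uᵀ * W0 = 0 := by rw [Matrix.mul_assoc, hUtW0, Matrix.mul_zero]
    have e3 : W0ᵀ * (U * Vᵀ) = 0 := by rw [← Matrix.mul_assoc, hW0tU, Matrix.zero_mul]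
    rw [e1, e2, e3]
    abel
  have hPQ0 : (V * Vᵀ) * (W0ᵀ * W0) = 0 := by
    rw [Matrix.mul_assoc, ← Matrix.mul_assoc Vᵀ W0ᵀ W0, hVtW0t, Matrix.zero_mul, Matrix.mul_zero]
  have hspecUVW0 : specNorm (U * Vᵀ + W0) ≤ 1 := by
    apply specNorm_le_one_of_quad
    intro x
    rw [hquadUVW0]
    exact quad_le hVVt_sym hVVt_idem hsym hidem hPQ0 x
  have hspecUVt : specNorm (U * Vᵀ) ≤ 1 := by
    apply specNorm_le_one_of_quad
    intro x
    have h : (U * Vᵀ)ᵀ * (U * Vᵀ) = V * Vᵀ := by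
      rw [Matrix.transpose_mul, Matrix.transpose_transpose, Matrix.mul_assoc,
        ← Matrix.mul_assoc Uᵀ U, hU, Matrix.one_mul]
    rw [h]
    exact quad_le' hVVt_sym hVVt_idem x
  -- nuclear norm of L0
  have hUcol : ∀ i, vnorm (fun p => U p i) ≤ 1 := by
    intro i
    apply vnorm_col_le_one
    rw [hU]
    simp
  have hVcol : ∀ i, vnorm (fun p => V p i) ≤ 1 := by
    intro i
    apply vnorm_col_le_one
    rw [hV]
    simp
  have hσ0 : ∀ i, 0 ≤ σ i := fun i => le_of_lt (hσ i)
  have hsumσ0 : 0 ≤ ∑ i, σ i := Finset.sum_nonneg fun i _ => hσ0 i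
  have hUVL0 : finner (U * Vᵀ) L0 = ∑ i, σ i := by
    rw [hSVD, finner_mul_Vt]
    have hZV : (U * Vᵀ) * V = U := by rw [Matrix.mul_assoc, hV, Matrix.mul_one]
    rw [hZV, finner_eq_trace, Matrix.transpose_mul, Matrix.diagonal_transpose,
      Matrix.mul_assoc, hU, Matrix.mul_one, Matrix.trace_diagonal]
  have hnucL0 : nuclearNorm L0 = ∑ i, σ i := by
    apply le_antisymm
    · obtain ⟨_, G0, C0, _, ⟨hs0', hi0'⟩, hG0L0, _⟩ := svd_package L0
      have hspecG0 : specNorm G0 ≤ 1 := specNorm_le_one_of_sym_idem hs0' hi0'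
      calc nuclearNorm L0 = finner G0 L0 := hG0L0.symm
        _ = finner G0 (U * Matrix.diagonal σ * Vᵀ) := by rw [← hSVD]
        _ ≤ specNorm G0 * ∑ i, σ i := finner_factored_le G0 U V σ hσ0 hUcol hVcol
        _ ≤ 1 * ∑ i, σ i := mul_le_mul_of_nonneg_right hspecG0 hsumσ0
        _ = ∑ i, σ i := one_mul _
    · calc ∑ i, σ i = finner (U * Vᵀ) L0 := hUVL0.symm
        _ ≤ specNorm (U * Vᵀ) * nuclearNorm L0 := finner_le_spec_mul_nuclear _ _
        _ ≤ 1 * nuclearNorm L0 :=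
            mul_le_mul_of_nonneg_right hspecUVt (nuclearNorm_nonneg _)
        _ = nuclearNorm L0 := one_mul _
  have hL0T : L0 ∈ Tspace U V := by
    refine ⟨V * Matrix.diagonal σ, 0, ?_⟩
    rw [Matrix.transpose_mul, Matrix.diagonal_transpose, Matrix.zero_mul, add_zero,
      ← Matrix.mul_assoc]
    exact hSVD
  have hW0L0 : finner W0 L0 = 0 := hW0T L0 hL0T
  have hW0H : finner W0 H = a := by
    rw [hfsplit W0, hW0X, hW0T (PT H) (hPT.1 H), add_zero]
  have hWH : finner W H = finner W PTpH := by
    rw [hfsplit W, hWT (PT H) (hPT.1 H), add_zero]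
  -- inequality I1
  have hfUVW0L : finner (U * Vᵀ + W0) L ≤ nuclearNorm L := by
    calc finner (U * Vᵀ + W0) L ≤ specNorm (U * Vᵀ + W0) * nuclearNorm L :=
          finner_le_spec_mul_nuclear _ _
      _ ≤ 1 * nuclearNorm L := mul_le_mul_of_nonneg_right hspecUVW0 (nuclearNorm_nonneg _)
      _ = nuclearNorm L := one_mul _
  have hfUVW0L' : finner (U * Vᵀ + W0) L
      = nuclearNorm L0 + finner (U * Vᵀ) H + a := by
    rw [hL, finner_add_right, finner_add_left, finner_add_left, hUVL0, hW0L0, hW0H, hnucL0]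
    ring
  have I1 : nuclearNorm L0 + finner (U * Vᵀ) H + a ≤ nuclearNorm L := by
    rw [← hfUVW0L']; exact hfUVW0L
  -- inequality I2
  have I2 : l1Norm S0 - finner (sgnMat S0) H + b ≤ l1Norm S := by
    rw [hS, hb, hΩ]
    exact l1_subgrad S0 H
  -- the certificate matrix D
  set D : Matrix (Fin n) (Fin n) ℝ := U * Vᵀ - lam • sgnMat S0 + W with hD
  have hI3 : finner D H
      = finner (U * Vᵀ) H - lam * finner (sgnMat S0) H + finner W H := by
    rw [hD, finner_add_left, finner_sub_left, finner_smul_left]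
  have hsplitD : finner D H = finner (projSet Ω D) (projSet Ω H)
      + finner (D - projSet Ω D) (H - projSet Ω H) := finner_split Ω D H
  have hTΩ : |finner (projSet Ω D) (projSet Ω H)| ≤ (lam / 4) * frobNorm (projSet Ω H) := by
    calc |finner (projSet Ω D) (projSet Ω H)|
        ≤ frobNorm (projSet Ω D) * frobNorm (projSet Ω H) := abs_finner_le _ _
      _ ≤ (lam / 4) * frobNorm (projSet Ω H) :=
          mul_le_mul_of_nonneg_right hW3 (frobNorm_nonneg _)
  have hDid : D - projSet Ω D = (U * Vᵀ + W) - projSet Ω (U * Vᵀ + W) := by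
    rw [hD, hΩ, projSet_add, projSet_sub, projSet_smul, sgn_proj, projSet_add]
    abel
  have hTc : |finner (D - projSet Ω D) (H - projSet Ω H)|
      ≤ linfNorm ((U * Vᵀ + W) - projSet Ω (U * Vᵀ + W)) * b := by
    rw [hDid, hb]
    exact abs_finner_le_linf_mul_l1 _ _
  -- Frobenius chain
  have hfP : frobNorm (projSet Ω H) ≤ b + 2 * a := by
    have c1 : frobNorm H ≤ frobNorm (projSet Ω H) + frobNorm (H - projSet Ω H) := by
      have hdec : H = projSet Ω H + (H - projSet Ω H) := by abel
      calc frobNorm H = frobNorm (projSet Ω H + (H - projSet Ω H)) := by rw [← hdec]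
        _ ≤ _ := frobNorm_add_le _ _
    have c2 : frobNorm (projSet Ω H) ≤ (1 / 2) * frobNorm H + frobNorm PTpH := by
      have hHPT : H = PT H + PTpH := by rw [hPTp]; abel
      have hps : projSet Ω H = projSet Ω (PT H) + projSet Ω PTpH := by
        calc projSet Ω H = projSet Ω (PT H + PTpH) := by rw [← hHPT]
          _ = _ := projSet_add _ _ _
      calc frobNorm (projSet Ω H)
          = frobNorm (projSet Ω (PT H) + projSet Ω PTpH) := by rw [hps]
        _ ≤ frobNorm (projSet Ω (PT H)) + frobNorm (projSet Ω PTpH) := frobNorm_add_le _ _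
        _ ≤ (1 / 2) * frobNorm H + frobNorm PTpH :=
            add_le_add (hop H) (frob_projSet_le Ω PTpH)
    have c3 : frobNorm PTpH ≤ a := by rw [ha]; exact frobNorm_le_nuclearNorm PTpH
    have c4 : frobNorm (H - projSet Ω H) ≤ b := by rw [hb]; exact frobNorm_le_l1Norm _
    linarith
  -- numeric bounds
  have eW : |finner W H| ≤ specNorm W * a := by
    rw [hWH, ha]
    exact abs_finner_le_spec_mul_nuclear W PTpH
  have hspecW0 : 0 ≤ specNorm W := specNorm_nonneg W
  have hfP0 : 0 ≤ frobNorm (projSet Ω H) := frobNorm_nonneg _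
  have hlinf0 : 0 ≤ linfNorm ((U * Vᵀ + W) - projSet Ω (U * Vᵀ + W)) := linfNorm_nonneg _
  have eTΩ : -((lam / 4) * (b + 2 * a)) ≤ finner (projSet Ω D) (projSet Ω H) := by
    have h1 : (lam / 4) * frobNorm (projSet Ω H) ≤ (lam / 4) * (b + 2 * a) :=
      mul_le_mul_of_nonneg_left hfP (by linarith)
    have h2 := (abs_le.mp hTΩ).1
    linarith
  have hprod1 : (lam / 4) * (b + 2 * a) = (lam * b) / 4 + (lam * a) / 2 := by ring
  have hI2' : lam * l1Norm S0 - lam * finner (sgnMat S0) H + lam * b ≤ lam * l1Norm S := by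
    have h := mul_le_mul_of_nonneg_left I2 hlam0.le
    calc lam * l1Norm S0 - lam * finner (sgnMat S0) H + lam * b
        = lam * (l1Norm S0 - finner (sgnMat S0) H + b) := by ring
      _ ≤ lam * l1Norm S := h
  by_cases hA : a = 0
  · by_cases hB : b = 0
    · exfalso
      have hPTp0 : PTpH = 0 := by
        apply frobNorm_eq_zero
        have h1 : frobNorm PTpH ≤ a := by rw [ha]; exact frobNorm_le_nuclearNorm PTpH
        have h2 := frobNorm_nonneg PTpH
        linarith
      have hHPT : H = PT H := by
        have h5 : H - PT H = 0 := by rw [← hPTp]; exact hPTp0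
        exact sub_eq_zero.mp h5
      have hHΩkill : H - projSet Ω H = 0 := l1Norm_eq_zero (hb.symm.trans hB)
      have hHΩ : H = projSet Ω H := by
        have := sub_eq_zero.mp hHΩkill
        exact this
      have hfrobH : frobNorm H ≤ (1 / 2) * frobNorm H := by
        calc frobNorm H = frobNorm (projSet Ω (PT H)) := by rw [← hHPT, ← hHΩ]
          _ ≤ (1 / 2) * frobNorm H := hop H
      have hfH0 : frobNorm H = 0 := by
        have := frobNorm_nonneg H
        linarith
      have hH0 : H = 0 := frobNorm_eq_zero hfH0
      apply hne
      have hL0 : L = L0 := by rw [hL, hH0, add_zero]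
      have hS0 : S = S0 := by rw [hS, hH0, sub_zero]
      rw [hL0, hS0]
    · have hBpos : 0 < b := lt_of_le_of_ne hb0 (Ne.symm hB)
      have eTc' : -((lam / 2) * b) < finner (D - projSet Ω D) (H - projSet Ω H) := by
        have h1 : linfNorm ((U * Vᵀ + W) - projSet Ω (U * Vᵀ + W)) * b < (lam / 2) * b :=
          mul_lt_mul_of_pos_right hW4 hBpos
        have h2 := (abs_le.mp hTc).1
        linarith
      have eW0 : finner W H = 0 := by
        rw [hA, mul_zero] at eW
        have h3 := abs_nonneg (finner W H)
        exact abs_eq_zero.mp (le_antisymm eW h3)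
      have hlamb : 0 < lam * b := mul_pos hlam0 hBpos
      have hlama : lam * a = 0 := by rw [hA, mul_zero]
      have hDlow : finner D H > -((lam / 4) * (b + 2 * a)) - (lam / 2) * b := by
        rw [hsplitD]
        linarith
      linarith [I1, hI2', hI3]
  · have hApos : 0 < a := lt_of_le_of_ne ha0 (Ne.symm hA)
    have eWstrict : finner W H < (1 / 2) * a := by
      have h1 : specNorm W * a < (1 / 2) * a := mul_lt_mul_of_pos_right hW2 hApos
      have h2 := (abs_le.mp eW).2
      linarith
    have eTc2 : -((lam / 2) * b) ≤ finner (D - projSet Ω D) (H - projSet Ω H) := by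
      have h1 : linfNorm ((U * Vᵀ + W) - projSet Ω (U * Vᵀ + W)) * b ≤ (lam / 2) * b :=
        mul_le_mul_of_nonneg_right (le_of_lt hW4) hb0
      have h2 := (abs_le.mp hTc).1
      linarith
    have hDlow : finner D H ≥ -((lam / 4) * (b + 2 * a)) - (lam / 2) * b := by
      rw [hsplitD]
      linarith
    have hlamA : lam * a ≤ a := by
      have := mul_le_mul_of_nonneg_right (le_of_lt hlam) ha0
      rwa [one_mul] at this
    have hlamb0 : 0 ≤ lam * b := mul_nonneg hlam0.le hb0
    linarith [I1, hI2', hI3]
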